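/- arXiv:2011.08651 — 3 statements merged into one kernel-verified Lean document; each statement's English description precedes it below -/
import Mathlib

section
/- For any real a > 0 and any bounded measurable f, the TUBA bound holds: D_KL(P ‖ Q) ≥ E_P[f] − E_Q[e^f]/a − log a + 1. -/
open MeasureTheory Real

/-- KL divergence as the integral of the log Radon–Nikodym derivative. -/
noncomputable def klDivergence {α : Type*} [MeasurableSpace α] (P Q : Measure α) : ℝ :=
  ∫ x, Real.log ((P.rnDeriv Q x).toReal) ∂P

/-- TUBA bound: for probability measures `P ≪ Q`, any `a > 0` and any bounded
measurable `f`, `D_KL(P ‖ Q) ≥ E_P[f] - E_Q[e^f]/a - log a + 1`. -/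
theorem tuba_lower_bound
    {α : Type*} [MeasurableSpace α]
    (P Q : Measure α) [IsProbabilityMeasure P] [IsProbabilityMeasure Q]
    (hac : P ≪ Q)
    (hKL : Integrable (fun x => Real.log ((P.rnDeriv Q x).toReal)) P)
    (a : ℝ) (ha : 0 < a)
    (f : α → ℝ) (hf : Measurable f) (M : ℝ) (hbd : ∀ x, |f x| ≤ M) :
    (∫ x, f x ∂P) - (∫ x, Real.exp (f x) ∂Q) / a - Real.log a + 1
      ≤ klDivergence P Q := by
  set r : α → ℝ := fun x => (P.rnDeriv Q x).toReal with hr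
  set g : α → ℝ := fun x => Real.exp (f x) / (a * r x) with hg
  have hrm : Measurable r := (Measure.measurable_rnDeriv P Q).ennreal_toReal
  have hgm : Measurable g := (hf.exp).div ((measurable_const.mul hrm))
  have hfi : Integrable f P :=
    (integrable_const M).mono' hf.aestronglyMeasurable (Filter.Eventually.of_forall hbd)
  -- integrability of g wrt P
  have hgi : Integrable g P := by
    refine ⟨hgm.aestronglyMeasurable, ?_⟩
    rw [MeasureTheory.HasFiniteIntegral]
    calc ∫⁻ x, ‖g x‖₊ ∂P = ∫⁻ x, P.rnDeriv Q x * ‖g x‖₊ ∂Q := by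
          conv_lhs => rw [← Measure.withDensity_rnDeriv_eq P Q hac]
          rw [lintegral_withDensity_eq_lintegral_mul _ (Measure.measurable_rnDeriv P Q)
            (by exact hgm.nnnorm.coe_nnreal_ennreal)]
          rfl
      _ ≤ ∫⁻ _, ENNReal.ofReal (Real.exp M / a) ∂Q := by
          refine lintegral_mono fun x => ?_
          rcases eq_or_ne (P.rnDeriv Q x) ⊤ with htop | htop
          · have h1 : r x = 0 := by simp [hr, htop]
            have h2 : g x = 0 := by simp [hg, h1]
            simp [h2, ENNReal.toReal_nonneg, div_nonneg, (Real.exp_pos M).le, ha.le]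
          · rcases eq_or_ne (P.rnDeriv Q x) 0 with h0 | h0
            · simp [h0]
            · have hrx : 0 < r x := ENNReal.toReal_pos h0 htop
              have heq : P.rnDeriv Q x = ENNReal.ofReal (r x) := by
                simp [hr, ENNReal.ofReal_toReal htop]
              rw [heq, ← ENNReal.ofReal_coe_nnreal, ← ENNReal.ofReal_mul hrx.le]
              refine ENNReal.ofReal_le_ofReal ?_
              have hnn : (‖g x‖₊ : ℝ) = g x := by
                rw [coe_nnnorm, Real.norm_eq_abs, abs_of_nonneg]
                exact div_nonneg (Real.exp_pos _).le (by positivity)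
              rw [hnn, hg]
              have hpr : r x * (Real.exp (f x) / (a * r x)) = Real.exp (f x) / a := by
                field_simp
              rw [hpr]
              exact div_le_div_of_nonneg_right (Real.exp_le_exp.2 ((abs_le.1 (hbd x)).2)) ha.le
      _ < ⊤ := by
          rw [lintegral_const]
          exact ENNReal.mul_lt_top ENNReal.ofReal_lt_top (measure_lt_top Q Set.univ)
  -- a.e. pointwise inequality: f x ≤ log (r x) + g x + (log a - 1)
  have hae : ∀ᵐ x ∂P, f x ≤ Real.log (r x) + g x + (Real.log a - 1) := by
    filter_upwards [hac.ae_le (Measure.rnDeriv_lt_top P Q), Measure.rnDeriv_pos hac]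
      with x hfin hpos
    have hrx : 0 < r x := ENNReal.toReal_pos hpos.ne' hfin.ne
    have ht : 0 < Real.exp (f x) / r x := div_pos (Real.exp_pos _) hrx
    have key : Real.log (Real.exp (f x) / r x) ≤ (Real.exp (f x) / r x) / a + Real.log a - 1 := by
      have := Real.log_le_sub_one_of_pos (show 0 < (Real.exp (f x) / r x) / a by positivity)
      rw [Real.log_div ht.ne' ha.ne'] at this
      linarith
    rw [Real.log_div (Real.exp_pos _).ne' hrx.ne', Real.log_exp] at key
    have hgx : g x = (Real.exp (f x) / r x) / a := by
      rw [hg]; field_simp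
    rw [hgx]; linarith
  -- integrate
  have hint : ∫ x, f x ∂P ≤ klDivergence P Q + ∫ x, g x ∂P + (Real.log a - 1) := by
    have h1 := integral_mono_ae hfi ((hKL.add hgi).add (integrable_const (Real.log a - 1))) hae
    simp only [Pi.add_apply] at h1
    rw [integral_add
        (show Integrable (fun x => Real.log ((P.rnDeriv Q x).toReal) + g x) P from hKL.add hgi)
        (integrable_const _), integral_add hKL hgi,
      integral_const, probReal_univ, one_smul] at h1
    exact h1
  -- ∫ g ∂P ≤ (∫ exp f ∂Q) / a
  have hgle : ∫ x, g x ∂P ≤ (∫ x, Real.exp (f x) ∂Q) / a := by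
    rw [← MeasureTheory.integral_rnDeriv_smul hac (f := g)]
    rw [div_eq_mul_inv, ← integral_mul_const]
    refine integral_mono_ae ((MeasureTheory.integrable_rnDeriv_smul_iff hac).2 hgi)
      (((integrable_const (Real.exp M)).mono' hf.exp.aestronglyMeasurable
        (Filter.Eventually.of_forall fun x => by
          rw [Real.norm_eq_abs, abs_of_nonneg (Real.exp_pos _).le]
          exact Real.exp_le_exp.2 ((abs_le.1 (hbd x)).2))).mul_const _)
      (Filter.Eventually.of_forall fun x => ?_)
    simp only [smul_eq_mul]
    rcases eq_or_lt_of_le (show (0:ℝ) ≤ r x from ENNReal.toReal_nonneg) with h0 | h0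
    · rw [hg]; simp [← h0]
      positivity
    · have : r x * g x = Real.exp (f x) / a := by rw [hg]; field_simp
      rw [this, div_eq_mul_inv]
  have : ∫ x, f x ∂P ≤ klDivergence P Q + (∫ x, Real.exp (f x) ∂Q) / a + (Real.log a - 1) := by
    linarith
  linarith
end

section
/- The function f*(x) = log(dP/dQ(x)) maximizes the GAN discriminator objective E_P[log σ(f(x))] + E_Q[log(1 − σ(f(x)))] over all measurable f, where σ is the logistic sigmoid. -/
open MeasureTheory Real

/-- The logistic sigmoid `σ(t) = 1 / (1 + e^{-t})`. -/
noncomputable def sigmoid (t : ℝ) : ℝ := (1 + Real.exp (-t))⁻¹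

lemma sigmoid_pos (t : ℝ) : 0 < _root_.sigmoid t := by
  unfold _root_.sigmoid; positivity

lemma sigmoid_lt_one (t : ℝ) : _root_.sigmoid t < 1 := by
  unfold _root_.sigmoid
  have h : (1:ℝ) < 1 + Real.exp (-t) := by linarith [Real.exp_pos (-t)]
  rw [inv_lt_one_iff₀]
  right; exact h

lemma sigmoid_log (r : ℝ) (hr : 0 < r) : _root_.sigmoid (Real.log r) = r / (1 + r) := by
  unfold _root_.sigmoid
  rw [Real.exp_neg, Real.exp_log hr]
  rw [inv_eq_iff_eq_inv, inv_div]
  field_simp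
  ring

lemma one_sub_sigmoid_log (r : ℝ) (hr : 0 < r) :
    1 - _root_.sigmoid (Real.log r) = 1 / (1 + r) := by
  rw [_root_.sigmoid_log r hr]
  field_simp
  ring

/-- Pointwise optimality: for `r > 0` and `s ∈ (0,1)`,
`r log s + log (1-s)` is maximized at `s = r/(1+r)`. -/
lemma key_ineq (r s : ℝ) (hr : 0 < r) (hs0 : 0 < s) (hs1 : s < 1) :
    r * Real.log s + Real.log (1 - s)
      ≤ r * Real.log (r / (1 + r)) + Real.log (1 / (1 + r)) := by
  have hr1 : (0:ℝ) < 1 + r := by linarith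
  have h1 : Real.log (s * (1 + r) / r) ≤ s * (1 + r) / r - 1 :=
    Real.log_le_sub_one_of_pos (by positivity)
  have h2 : Real.log ((1 - s) * (1 + r)) ≤ (1 - s) * (1 + r) - 1 :=
    Real.log_le_sub_one_of_pos (by nlinarith)
  have e1 : Real.log (s * (1 + r) / r) = Real.log s - Real.log (r / (1 + r)) := by
    rw [Real.log_div (by positivity) hr.ne', Real.log_mul hs0.ne' hr1.ne',
      Real.log_div hr.ne' hr1.ne']
    ring
  have e2 : Real.log ((1 - s) * (1 + r)) = Real.log (1 - s) - Real.log (1 / (1 + r)) := by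
    rw [Real.log_mul (by linarith : (1:ℝ) - s ≠ 0) hr1.ne',
      Real.log_div one_ne_zero hr1.ne', Real.log_one]
    ring
  rw [e1] at h1; rw [e2] at h2
  have h3 := mul_le_mul_of_nonneg_left h1 hr.le
  have h4 : r * (s * (1 + r) / r - 1) = s * (1 + r) - r := by
    field_simp
  rw [h4] at h3
  nlinarith [h3, h2]

/-- The critic `f* = log (dP/dQ)` maximizes the GAN discriminator objective
`E_P[log σ(f)] + E_Q[log (1 - σ(f))]` over all measurable critics `f`
(for which the objective is well defined). -/
theorem gan_objective_maximized_by_log_density_ratio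
    {α : Type*} [MeasurableSpace α]
    (P Q : Measure α) [IsProbabilityMeasure P] [IsProbabilityMeasure Q]
    (hPQ : P ≪ Q) (hQP : Q ≪ P)
    (fstar : α → ℝ)
    (hfstar : ∀ x, fstar x = Real.log ((P.rnDeriv Q x).toReal))
    (hstar1 : Integrable (fun x => Real.log (_root_.sigmoid (fstar x))) P)
    (hstar2 : Integrable (fun x => Real.log (1 - _root_.sigmoid (fstar x))) Q)
    (f : α → ℝ) (hf : Measurable f)
    (hint1 : Integrable (fun x => Real.log (_root_.sigmoid (f x))) P)
    (hint2 : Integrable (fun x => Real.log (1 - _root_.sigmoid (f x))) Q) :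
    (∫ x, Real.log (_root_.sigmoid (f x)) ∂P) + (∫ x, Real.log (1 - _root_.sigmoid (f x)) ∂Q)
      ≤ (∫ x, Real.log (_root_.sigmoid (fstar x)) ∂P)
          + (∫ x, Real.log (1 - _root_.sigmoid (fstar x)) ∂Q) := by
  set r : α → ℝ := fun x => (P.rnDeriv Q x).toReal with hrdef
  -- move the P-integrals to Q-integrals against the density
  have hIf : Integrable (fun x => r x * Real.log (_root_.sigmoid (f x))) Q := by
    simpa [smul_eq_mul] using (integrable_rnDeriv_smul_iff hPQ).2 hint1
  have hIfs : Integrable (fun x => r x * Real.log (_root_.sigmoid (fstar x))) Q := by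
    simpa [smul_eq_mul] using (integrable_rnDeriv_smul_iff hPQ).2 hstar1
  have hEf : ∫ x, Real.log (_root_.sigmoid (f x)) ∂P
      = ∫ x, r x * Real.log (_root_.sigmoid (f x)) ∂Q := by
    rw [← integral_rnDeriv_smul hPQ]
    simp [smul_eq_mul]
    rfl
  have hEfs : ∫ x, Real.log (_root_.sigmoid (fstar x)) ∂P
      = ∫ x, r x * Real.log (_root_.sigmoid (fstar x)) ∂Q := by
    rw [← integral_rnDeriv_smul hPQ]
    simp [smul_eq_mul]
    rfl
  -- a.e. positivity and finiteness of the density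
  have hpos : ∀ᵐ x ∂Q, 0 < P.rnDeriv Q x := Measure.rnDeriv_pos' hQP
  have hlt : ∀ᵐ x ∂Q, P.rnDeriv Q x < ⊤ := Measure.rnDeriv_lt_top P Q
  -- pointwise inequality a.e.
  have hae : ∀ᵐ x ∂Q,
      r x * Real.log (_root_.sigmoid (f x)) + Real.log (1 - _root_.sigmoid (f x))
        ≤ r x * Real.log (_root_.sigmoid (fstar x)) + Real.log (1 - _root_.sigmoid (fstar x)) := by
    filter_upwards [hpos, hlt] with x hx hx'
    have hrx : 0 < r x := ENNReal.toReal_pos hx.ne' hx'.ne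
    have hs := _root_.sigmoid_log (r x) hrx
    have hs' := _root_.one_sub_sigmoid_log (r x) hrx
    rw [hfstar x, hs', hs]
    exact key_ineq (r x) (_root_.sigmoid (f x)) hrx (_root_.sigmoid_pos _) (_root_.sigmoid_lt_one _)
  calc (∫ x, Real.log (_root_.sigmoid (f x)) ∂P) + (∫ x, Real.log (1 - _root_.sigmoid (f x)) ∂Q)
      = ∫ x, r x * Real.log (_root_.sigmoid (f x)) + Real.log (1 - _root_.sigmoid (f x)) ∂Q := by
        rw [hEf, ← integral_add hIf hint2]
    _ ≤ ∫ x, r x * Real.log (_root_.sigmoid (fstar x)) + Real.log (1 - _root_.sigmoid (fstar x)) ∂Q :=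
        integral_mono_ae (hIf.add hint2) (hIfs.add hstar2) hae
    _ = (∫ x, Real.log (_root_.sigmoid (fstar x)) ∂P) + (∫ x, Real.log (1 - _root_.sigmoid (fstar x)) ∂Q) := by
        rw [hEfs, ← integral_add hIfs hstar2]
end

section
/- Let F be a class of functions uniformly bounded by M and let ψ : [−M, M] → ℝ be L-Lipschitz. Then the empirical Rademacher complexity satisfies R̂ₙ(ψ ∘ F) ≤ L · R̂ₙ(F), where ψ ∘ F = {ψ ∘ f : f ∈ F}. -/
open Finset
open Pointwise

/-- Rademacher sign associated to a boolean. -/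
def radSign (b : Bool) : ℝ := if b then 1 else -1

/-- Empirical Rademacher complexity of a class `F` of real-valued functions on the
sample `x₁,…,xₙ`, as an average over all `2ⁿ` sign vectors. -/
noncomputable def radComplexity {X : Type*} {n : ℕ} (F : Set (X → ℝ)) (x : Fin n → X) : ℝ :=
  (2 ^ n : ℝ)⁻¹ *
    ∑ σ : Fin n → Bool,
      sSup ((fun f : X → ℝ => (n : ℝ)⁻¹ * ∑ i : Fin n, radSign (σ i) * f (x i)) '' F)

lemma sSup_add_sSup_le' {A B : Set ℝ} (hA : A.Nonempty) (hB : B.Nonempty) {C : ℝ}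
    (h : ∀ a ∈ A, ∀ b ∈ B, a + b ≤ C) : sSup A + sSup B ≤ C := by
  have h1 : sSup A ≤ C - sSup B := by
    apply csSup_le hA
    intro a ha
    rw [le_sub_iff_add_le]
    have : sSup B ≤ C - a := by
      apply csSup_le hB
      intro b hb
      linarith [h a ha b hb]
    linarith
  linarith

lemma contraction_core {ι : Type*} {F : Set ι} (hF : F.Nonempty) (G φ u : ι → ℝ) (a : ℝ)
    (hlip : ∀ f ∈ F, ∀ g ∈ F, φ f - φ g ≤ |a| * |u f - u g|)
    (h1 : BddAbove ((fun f => G f + a * u f) '' F))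
    (h2 : BddAbove ((fun f => G f - a * u f) '' F)) :
    sSup ((fun f => G f + φ f) '' F) + sSup ((fun f => G f - φ f) '' F) ≤
      sSup ((fun f => G f + a * u f) '' F) + sSup ((fun f => G f - a * u f) '' F) := by
  apply sSup_add_sSup_le' (hF.image _) (hF.image _)
  rintro _ ⟨f, hf, rfl⟩ _ ⟨g, hg, rfl⟩
  show G f + φ f + (G g - φ g) ≤ _
  have key : φ f - φ g ≤ |a * (u f - u g)| := by
    rw [abs_mul]; exact hlip f hf g hg
  rcases abs_cases (a * (u f - u g)) with ⟨he, _⟩ | ⟨he, _⟩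
  · have c1 : G f + a * u f ≤ sSup ((fun f => G f + a * u f) '' F) :=
      le_csSup h1 ⟨f, hf, rfl⟩
    have c2 : G g - a * u g ≤ sSup ((fun f => G f - a * u f) '' F) :=
      le_csSup h2 ⟨g, hg, rfl⟩
    rw [he] at key
    nlinarith [key]
  · have c1 : G g + a * u g ≤ sSup ((fun f => G f + a * u f) '' F) :=
      le_csSup h1 ⟨g, hg, rfl⟩
    have c2 : G f - a * u f ≤ sSup ((fun f => G f - a * u f) '' F) :=
      le_csSup h2 ⟨f, hf, rfl⟩
    rw [he] at key
    nlinarith [key]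

/-- Talagrand's contraction lemma: if `F` is uniformly bounded by `M` and
`ψ` is `L`-Lipschitz on `[-M, M]`, then `R̂ₙ(ψ ∘ F) ≤ L · R̂ₙ(F)`. -/
theorem rademacher_contraction {X : Type*} {n : ℕ} (hn : 0 < n)
    (F : Set (X → ℝ)) (hF : F.Nonempty) (x : Fin n → X)
    (M : ℝ) (hbd : ∀ f ∈ F, ∀ y : X, |f y| ≤ M)
    (ψ : ℝ → ℝ) (L : ℝ) (hL : 0 ≤ L)
    (hlip : ∀ s ∈ Set.Icc (-M) M, ∀ t ∈ Set.Icc (-M) M, |ψ s - ψ t| ≤ L * |s - t|) :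
    radComplexity ((fun f : X → ℝ => ψ ∘ f) '' F) x ≤ L * radComplexity F x := by
  classical
  obtain ⟨f₀, hf₀⟩ := hF
  have hF : F.Nonempty := ⟨f₀, hf₀⟩
  have hM : 0 ≤ M := le_trans (abs_nonneg _) (hbd f₀ hf₀ (x ⟨0, hn⟩))
  have hmemIcc : ∀ f ∈ F, ∀ y : X, f y ∈ Set.Icc (-M) M := fun f hf y =>
    abs_le.mp (hbd f hf y)
  have h0Icc : (0:ℝ) ∈ Set.Icc (-M) M := ⟨by linarith, hM⟩
  set B : ℝ := |ψ 0| + L * M with hB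
  have hψbd : ∀ f ∈ F, ∀ y : X, |ψ (f y)| ≤ B := by
    intro f hf y
    have h1 : |ψ (f y) - ψ 0| ≤ L * |f y - 0| := hlip _ (hmemIcc f hf y) _ h0Icc
    have h2 : |f y - 0| ≤ M := by simpa using hbd f hf y
    have h3 : L * |f y - 0| ≤ L * M := by nlinarith
    calc |ψ (f y)| = |ψ (f y) - ψ 0 + ψ 0| := by ring_nf
      _ ≤ |ψ (f y) - ψ 0| + |ψ 0| := abs_add_le _ _
      _ ≤ B := by rw [hB]; linarith
  -- the interpolating families
  set term : Finset (Fin n) → (X → ℝ) → Fin n → ℝ :=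
    fun T f i => if i ∈ T then L * f (x i) else ψ (f (x i)) with hterm
  set val : Finset (Fin n) → (Fin n → Bool) → (X → ℝ) → ℝ :=
    fun T σ f => (n : ℝ)⁻¹ * ∑ i : Fin n, radSign (σ i) * term T f i with hval
  set S : Finset (Fin n) → (Fin n → Bool) → ℝ := fun T σ => sSup (val T σ '' F) with hS
  have htermbd : ∀ T, ∀ f ∈ F, ∀ i, |term T f i| ≤ B := by
    intro T f hf i
    rw [hterm]
    dsimp only
    split
    · rw [abs_mul, abs_of_nonneg hL, hB]
      have := hbd f hf (x i)
      have : L * |f (x i)| ≤ L * M := by nlinarith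
      have := abs_nonneg (ψ 0)
      calc L * |f (x i)| ≤ L * M := by assumption
        _ ≤ |ψ 0| + L * M := by linarith
    · exact hψbd f hf (x i)
  have hsign : ∀ b, |radSign b| = 1 := by
    intro b; cases b <;> simp [radSign]
  have hvalbd : ∀ T σ, ∀ f ∈ F, |val T σ f| ≤ B := by
    intro T σ f hf
    rw [hval]
    dsimp only
    rw [abs_mul]
    have h1 : |∑ i : Fin n, radSign (σ i) * term T f i| ≤ ∑ i : Fin n, B := by
      refine (Finset.abs_sum_le_sum_abs _ _).trans (Finset.sum_le_sum fun i _ => ?_)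
      rw [abs_mul, hsign]
      simpa using htermbd T f hf i
    have h2 : |((n:ℝ)⁻¹)| = (n:ℝ)⁻¹ := abs_of_nonneg (by positivity)
    rw [h2]
    have hn' : (0:ℝ) < n := by exact_mod_cast hn
    calc (n:ℝ)⁻¹ * |∑ i : Fin n, radSign (σ i) * term T f i|
        ≤ (n:ℝ)⁻¹ * (n * B) := by
          rw [mul_le_mul_iff_right₀ (by positivity)]
          simpa [Finset.sum_const, Finset.card_univ] using h1
      _ = B := by field_simp
  have hbdd : ∀ T σ, BddAbove (val T σ '' F) := by
    intro T σ
    exact ⟨B, by rintro _ ⟨f, hf, rfl⟩; exact (abs_le.mp (hvalbd T σ f hf)).2⟩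
  -- key one-coordinate step
  have key : ∀ T : Finset (Fin n), ∀ j ∉ T,
      ∑ σ : Fin n → Bool, S T σ ≤ ∑ σ : Fin n → Bool, S (insert j T) σ := by
    intro T j hj
    set flip : (Fin n → Bool) → (Fin n → Bool) :=
      fun σ => Function.update σ j (!σ j) with hflip
    have hinv : Function.Involutive flip := by
      intro σ; funext i
      by_cases hij : i = j
      · subst hij; simp [hflip]
      · simp [hflip, Function.update_of_ne hij]
    have pair : ∀ σ, S T σ + S T (flip σ) ≤ S (insert j T) σ + S (insert j T) (flip σ) := by
      intro σ
      set c : ℝ := (n : ℝ)⁻¹ * radSign (σ j) with hc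
      set G : (X → ℝ) → ℝ :=
        fun f => (n : ℝ)⁻¹ * ∑ i ∈ univ.erase j, radSign (σ i) * term T f i with hG
      have hsplit : ∀ (T' : Finset (Fin n)) (τ : Fin n → Bool),
          (∀ i ∈ univ.erase j, τ i = σ i) →
          val T' τ = fun f => ((n : ℝ)⁻¹ * ∑ i ∈ univ.erase j, radSign (σ i) * term T' f i)
            + (n : ℝ)⁻¹ * radSign (τ j) * term T' f j := by
        intro T' τ hτ
        funext f
        rw [hval]
        dsimp only
        rw [← Finset.sum_erase_add _ _ (mem_univ j), mul_add, mul_assoc]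
        congr 1
        congr 1
        apply Finset.sum_congr rfl
        intro i hi
        rw [hτ i hi]
      have htermT : ∀ f : X → ℝ, ∀ i ∈ univ.erase j, term (insert j T) f i = term T f i := by
        intro f i hi
        have : i ≠ j := (Finset.mem_erase.mp hi).1
        rw [hterm]
        simp only [Finset.mem_insert, this, false_or]
      have hflipj : radSign (flip σ j) = -radSign (σ j) := by
        rw [hflip]; simp only [Function.update_self]
        cases σ j <;> simp [radSign]
      have hflipe : ∀ i ∈ univ.erase j, flip σ i = σ i := by
        intro i hi
        exact Function.update_of_ne (Finset.mem_erase.mp hi).1 _ _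
      have hjT : ∀ f : X → ℝ, term T f j = ψ (f (x j)) := by
        intro f; simp only [hterm]; exact if_neg hj
      have hjT' : ∀ f : X → ℝ, term (insert j T) f j = L * f (x j) := by
        intro f; simp only [hterm]; exact if_pos (Finset.mem_insert_self j T)
      have hsum : ∀ f : X → ℝ,
          ∑ i ∈ univ.erase j, radSign (σ i) * term (insert j T) f i
            = ∑ i ∈ univ.erase j, radSign (σ i) * term T f i := fun f =>
        Finset.sum_congr rfl fun i hi => by rw [htermT f i hi]
      have e1 : val T σ = fun f => G f + c * ψ (f (x j)) := by
        rw [hsplit T σ (fun i _ => rfl)]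
        funext f
        rw [hjT f]
      have e2 : val T (flip σ) = fun f => G f - c * ψ (f (x j)) := by
        rw [hsplit T (flip σ) hflipe]
        funext f
        rw [hjT f, hflipj]
        simp only [hG, hc]
        ring
      have e3 : val (insert j T) σ = fun f => G f + (c * L) * f (x j) := by
        rw [hsplit (insert j T) σ (fun i _ => rfl)]
        funext f
        rw [hjT' f, hsum f]
        simp only [hG, hc]
        ring
      have e4 : val (insert j T) (flip σ) = fun f => G f - (c * L) * f (x j) := by
        rw [hsplit (insert j T) (flip σ) hflipe]
        funext f
        rw [hjT' f, hsum f, hflipj]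
        simp only [hG, hc]
        ring
      have hφlip : ∀ f ∈ F, ∀ g ∈ F,
          c * ψ (f (x j)) - c * ψ (g (x j)) ≤ |c * L| * |f (x j) - g (x j)| := by
        intro f hf g hg
        have h1 : |ψ (f (x j)) - ψ (g (x j))| ≤ L * |f (x j) - g (x j)| :=
          hlip _ (hmemIcc f hf _) _ (hmemIcc g hg _)
        calc c * ψ (f (x j)) - c * ψ (g (x j)) = c * (ψ (f (x j)) - ψ (g (x j))) := by ring
          _ ≤ |c * (ψ (f (x j)) - ψ (g (x j)))| := le_abs_self _
          _ = |c| * |ψ (f (x j)) - ψ (g (x j))| := abs_mul _ _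
          _ ≤ |c| * (L * |f (x j) - g (x j)|) := by
              have := abs_nonneg c
              nlinarith
          _ = |c * L| * |f (x j) - g (x j)| := by
              have habs : |c * L| = |c| * L := by rw [abs_mul c L, abs_of_nonneg hL]
              rw [habs]; ring
      have hb1 : BddAbove ((fun f => G f + (c * L) * f (x j)) '' F) := by
        rw [← e3]; exact hbdd _ _
      have hb2 : BddAbove ((fun f => G f - (c * L) * f (x j)) '' F) := by
        rw [← e4]; exact hbdd _ _
      have := contraction_core hF G (fun f => c * ψ (f (x j))) (fun f => f (x j)) (c * L)
        hφlip hb1 hb2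
      simp only [hS]
      rw [e1, e2, e3, e4]
      convert this using 4 <;> ring
    -- sum up
    have hflipsum : ∀ T', ∑ σ : Fin n → Bool, S T' σ = ∑ σ : Fin n → Bool, S T' (flip σ) :=
      fun T' => Fintype.sum_bijective flip hinv.bijective _ _ (fun σ => by rw [hinv σ])
    have h2 : 2 * ∑ σ : Fin n → Bool, S T σ ≤ 2 * ∑ σ : Fin n → Bool, S (insert j T) σ := by
      calc 2 * ∑ σ : Fin n → Bool, S T σ
          = ∑ σ : Fin n → Bool, (S T σ + S T (flip σ)) := by
            rw [Finset.sum_add_distrib, ← hflipsum]; ring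
        _ ≤ ∑ σ : Fin n → Bool, (S (insert j T) σ + S (insert j T) (flip σ)) :=
            Finset.sum_le_sum fun σ _ => pair σ
        _ = 2 * ∑ σ : Fin n → Bool, S (insert j T) σ := by
            rw [Finset.sum_add_distrib, ← hflipsum]; ring
    linarith
  -- induction: from ∅ to any T
  have mono : ∀ T : Finset (Fin n), ∑ σ : Fin n → Bool, S ∅ σ ≤ ∑ σ : Fin n → Bool, S T σ := by
    intro T
    induction T using Finset.induction with
    | empty => exact le_refl _
    | insert _ _ hj ih => exact ih.trans (key _ _ hj)
  have main := mono Finset.univ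
  -- identify endpoints
  have hLHS : radComplexity ((fun f : X → ℝ => ψ ∘ f) '' F) x
      = (2 ^ n : ℝ)⁻¹ * ∑ σ : Fin n → Bool, S ∅ σ := by
    unfold radComplexity
    refine congrArg _ (Finset.sum_congr rfl fun σ _ => ?_)
    rw [Set.image_image]
    simp only [hS]
    refine congrArg sSup (congrArg (· '' F) ?_)
    funext f
    simp only [hval, hterm, Function.comp_apply, Finset.notMem_empty, if_false]
  have hRHS : L * radComplexity F x = (2 ^ n : ℝ)⁻¹ * ∑ σ : Fin n → Bool, S univ σ := by
    unfold radComplexity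
    rw [← mul_assoc, mul_comm L, mul_assoc, Finset.mul_sum]
    refine congrArg _ (Finset.sum_congr rfl fun σ _ => ?_)
    set A : Set ℝ := (fun f : X → ℝ => (n : ℝ)⁻¹ * ∑ i : Fin n, radSign (σ i) * f (x i)) '' F
      with hA
    have hfun : (fun f : X → ℝ => L * ((n : ℝ)⁻¹ * ∑ i : Fin n, radSign (σ i) * f (x i)))
        = val univ σ := by
      funext f
      simp only [hval, hterm, Finset.mem_univ, if_true, Finset.mul_sum]
      exact Finset.sum_congr rfl fun i _ => by ring
    have himg : val univ σ '' F = L • A := by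
      rw [hA, ← Set.image_smul, Set.image_image, ← hfun]
      simp only [smul_eq_mul]
    simp only [hS]
    rw [himg, Real.sSup_smul_of_nonneg hL, smul_eq_mul, hA]
  rw [hLHS, hRHS]
  have h2n : (0:ℝ) ≤ (2 ^ n : ℝ)⁻¹ := by positivity
  exact mul_le_mul_of_nonneg_left main h2n
end
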